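/- If a rational number P/Q in lowest terms with gcd(Q, 10) = 1 has a purely periodic decimal expansion, then the length of the period equals the multiplicative order of 10 modulo Q, i.e., the least positive integer r with 10^r ≡ 1 (mod Q). -/

import Mathlib

/-- If `P/Q` is in lowest terms with `gcd(Q,10) = 1` and its decimal digit
sequence is purely periodic with minimal period `L`, then `L` equals the
multiplicative order of `10` modulo `Q`. -/
theorem decimal_period_eq_orderOf (P Q : ℕ) (hQ : 0 < Q)
    (hcop : Nat.Coprime P Q) (h10 : Nat.Coprime Q 10)
    (d : ℕ → ℕ) (hd : ∀ k, d k = P * 10 ^ (k + 1) / Q % 10)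
    (L : ℕ) (hL : 0 < L) (hper : ∀ k, d (k + L) = d k)
    (hmin : ∀ L', 0 < L' → (∀ k, d (k + L') = d k) → L ≤ L') :
    L = orderOf (10 : ZMod Q) := by
  haveI : NeZero Q := ⟨hQ.ne'⟩
  set a : ℕ → ℕ := fun k => P * 10 ^ k % Q with ha
  have haQ : ∀ k, a k < Q := fun k => Nat.mod_lt _ hQ
  -- digit formula in terms of remainders
  have hdk : ∀ k, d k = 10 * a k / Q := by
    intro k
    rw [hd]
    have h1 : P * 10 ^ (k + 1) = 10 * a k + (P * 10 ^ k / Q * 10) * Q := by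
      have h := Nat.div_add_mod (P * 10 ^ k) Q
      have : P * 10 ^ (k + 1) = (Q * (P * 10 ^ k / Q) + P * 10 ^ k % Q) * 10 := by
        rw [h]; ring
      rw [this]; simp only [ha]; ring
    rw [h1, Nat.add_mul_div_right _ _ hQ]
    have hlt : 10 * a k / Q < 10 := by
      rw [Nat.div_lt_iff_lt_mul hQ]
      have := haQ k
      omega
    rw [Nat.add_mul_mod_self_right, Nat.mod_eq_of_lt hlt]
  -- recurrence
  have hrec : ∀ k, Q * d k + a (k + 1) = 10 * a k := by
    intro k
    have h2 : a (k + 1) = 10 * a k % Q := by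
      simp only [ha]
      conv_lhs => rw [show P * 10 ^ (k + 1) = 10 * (P * 10 ^ k) by ring]
      simp [Nat.mul_mod]
    rw [hdk, h2, Nat.div_add_mod]
  -- the difference a (k+L) - a k grows geometrically
  set c : ℤ := (a L : ℤ) - (a 0 : ℤ) with hc
  have hdiff : ∀ k, (a (k + L) : ℤ) - (a k : ℤ) = 10 ^ k * c := by
    intro k
    induction k with
    | zero => simp [hc]
    | succ n ih =>
      have e1 := hrec (n + L)
      have e2 := hrec n
      have hp := hper n
      have : (a (n + 1 + L) : ℤ) - (a (n + 1) : ℤ) = 10 * ((a (n + L) : ℤ) - (a n : ℤ)) := by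
        have e1' : (Q : ℤ) * d (n + L) + a (n + L + 1) = 10 * a (n + L) := by exact_mod_cast e1
        have e2' : (Q : ℤ) * d n + a (n + 1) = 10 * a n := by exact_mod_cast e2
        rw [show n + 1 + L = n + L + 1 by ring]
        rw [hp] at e1'
        linarith
      rw [this, ih]; ring
  -- the difference is bounded, hence c = 0
  have hc0 : c = 0 := by
    by_contra hne
    have habs : (1 : ℤ) ≤ |c| := Int.one_le_abs hne
    have hk := hdiff Q
    have hbound : |(a (Q + L) : ℤ) - (a Q : ℤ)| < Q := by
      have h1 := haQ (Q + L); have h2 := haQ Q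
      rw [abs_sub_lt_iff]
      constructor <;> omega
    rw [hk, abs_mul, abs_pow] at hbound
    have hQpow : (Q : ℤ) < 10 ^ Q := by
      have : Q < 2 ^ Q := Nat.lt_two_pow_self
      have h2 : (2 : ℤ) ^ Q ≤ 10 ^ Q := pow_le_pow_left₀ (by norm_num) (by norm_num) Q
      calc (Q : ℤ) < (2 : ℤ) ^ Q := by exact_mod_cast this
        _ ≤ 10 ^ Q := h2
    have : (10 : ℤ) ^ Q ≤ |(10 : ℤ)| ^ Q * |c| := by
      have : |(10 : ℤ)| ^ Q = 10 ^ Q := by norm_num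
      nlinarith [pow_pos (by norm_num : (0:ℤ) < 10) Q]
    linarith
  -- hence 10^L ≡ 1 mod Q
  have hmodeq : (10 : ℕ) ^ L ≡ 1 [MOD Q] := by
    have haL : a L = a 0 := by omega
    have : P * 10 ^ L ≡ P * 1 [MOD Q] := by
      have : P * 10 ^ L % Q = P * 10 ^ 0 % Q := haL
      simpa [Nat.ModEq] using this
    exact (Nat.ModEq.cancel_left_of_coprime (by simpa [Nat.Coprime, Nat.gcd_comm] using hcop) this)
  have hpowL : (10 : ZMod Q) ^ L = 1 := by
    have := (ZMod.natCast_eq_natCast_iff _ _ _).mpr hmodeq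
    push_cast at this
    exact this
  have hdvd : orderOf (10 : ZMod Q) ∣ L := orderOf_dvd_of_pow_eq_one hpowL
  -- order is positive
  have hordpos : 0 < orderOf (10 : ZMod Q) := by
    have hu : IsUnit (10 : ZMod Q) := by
      have : ((10 : ℕ) : ZMod Q) = (10 : ZMod Q) := by push_cast; ring
      rw [← this]
      exact (ZMod.isUnit_iff_coprime 10 Q).mpr (by exact_mod_cast h10.symm)
    obtain ⟨u, hu⟩ := hu
    haveI : Finite (ZMod Q)ˣ := inferInstance
    rw [← hu, orderOf_units]
    exact orderOf_pos u
  -- the order gives a period of d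
  have hper' : ∀ k, d (k + orderOf (10 : ZMod Q)) = d k := by
    intro k
    set r := orderOf (10 : ZMod Q)
    have hpow : (10 : ℕ) ^ r ≡ 1 [MOD Q] := by
      have h1 : (10 : ZMod Q) ^ r = 1 := pow_orderOf_eq_one _
      have : ((10 ^ r : ℕ) : ZMod Q) = ((1 : ℕ) : ZMod Q) := by push_cast; exact h1
      exact (ZMod.natCast_eq_natCast_iff _ _ _).mp this
    have haeq : a (k + r) = a k := by
      simp only [ha]
      have : P * 10 ^ (k + r) ≡ P * 10 ^ k [MOD Q] := by
        calc P * 10 ^ (k + r) = P * 10 ^ k * 10 ^ r := by ring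
          _ ≡ P * 10 ^ k * 1 [MOD Q] := Nat.ModEq.mul_left _ hpow
          _ = P * 10 ^ k := by ring
      exact this
    rw [hdk, hdk, haeq]
  exact le_antisymm (hmin _ hordpos hper') (Nat.le_of_dvd hL hdvd)
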